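/- Let c > 0 be a real constant such that N((r,1),t) ≥ c · (r² / log r) · log t for all integers r ≥ 2 and t ≥ r + 1 (log denoting the natural logarithm). Then for all positive integers r, w, t with r ≥ w, r ≥ 2 and t ≥ r + w, it holds that N((r,w),t) ≥ c · ((C(r+w, w+1) + C(r+w−1, w+1) + 3·C(r+w−4, w−2)) / log r) · log(t−w+1), where C(·,·) denotes the binomial coefficient (equal to 0 when the lower index is negative or exceeds the upper index). -/
import Mathlib

/-- `B : Fin t → Finset (Fin n)` is an (r,w;d)-cover-free family: for any disjoint
index sets `L, M` with `|L| = r`, `|M| = w`, the intersection of the blocks in `L`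
has at least `d` elements outside the union of the blocks in `M`. -/
def IsCFF (r w d n t : ℕ) (B : Fin t → Finset (Fin n)) : Prop :=
  ∀ L M : Finset (Fin t), Disjoint L M → L.card = r → M.card = w →
    d ≤ ((L.inf B) \ (M.sup B)).card

/-- `Ncff r w d t` = `N((r,w;d),t)`, the minimum number of points of an
(r,w;d)-CFF with `t` blocks, with the convention that it equals 1 if `r = 0` or `w = 0`. -/
noncomputable def Ncff (r w d t : ℕ) : ℕ :=
  if r = 0 ∨ w = 0 then 1
  else sInf {n : ℕ | ∃ B : Fin t → Finset (Fin n), IsCFF r w d n t B}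


lemma compl_sdiff_eq (n t : ℕ) (B : Fin t → Finset (Fin n)) (L M : Finset (Fin t)) :
    (L.inf (fun i => (B i)ᶜ)) \ (M.sup (fun i => (B i)ᶜ)) = (M.inf B) \ (L.sup B) := by
  ext x
  simp only [Finset.mem_sdiff, Finset.mem_inf, Finset.mem_sup, Finset.mem_compl]
  push_neg
  tauto

lemma isCFF_compl {r w d n t : ℕ} {B : Fin t → Finset (Fin n)} (h : IsCFF r w d n t B) :
    IsCFF w r d n t (fun i => (B i)ᶜ) := by
  intro L M hd hL hM
  rw [compl_sdiff_eq]
  exact h M L hd.symm hM hL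

lemma ncff_symm (r w d t : ℕ) : Ncff r w d t = Ncff w r d t := by
  unfold Ncff
  have hset : {n : ℕ | ∃ B : Fin t → Finset (Fin n), IsCFF r w d n t B} =
      {n : ℕ | ∃ B : Fin t → Finset (Fin n), IsCFF w r d n t B} := by
    ext n
    constructor
    · rintro ⟨B, hB⟩; exact ⟨_, isCFF_compl hB⟩
    · rintro ⟨B, hB⟩
      refine ⟨fun i => (B i)ᶜ, ?_⟩
      have := isCFF_compl hB
      simpa using this
  rw [hset]
  by_cases h : r = 0 ∨ w = 0
  · rw [if_pos h, if_pos (or_comm.mp h)]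
  · rw [if_neg h, if_neg (fun h' => h (or_comm.mp h'))]

lemma cff_exists (r w t : ℕ) : ∃ B : Fin t → Finset (Fin (2^t)), IsCFF r w 1 (2^t) t B := by
  have hcard : Fintype.card (Finset (Fin t)) = 2 ^ t := by simp
  let e : Finset (Fin t) ≃ Fin (2 ^ t) := Fintype.equivFinOfCardEq hcard
  refine ⟨fun i => Finset.univ.filter (fun x => i ∈ e.symm x), ?_⟩
  intro L M hd hL hM
  rw [Finset.one_le_card]
  refine ⟨e L, ?_⟩
  simp only [Finset.mem_sdiff, Finset.mem_inf, Finset.mem_sup, Finset.mem_filter,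
    Finset.mem_univ, true_and, Equiv.symm_apply_apply]
  constructor
  · intro i hi; exact hi
  · rintro ⟨m, hm, hmL⟩
    exact (Finset.disjoint_left.mp hd hmL) hm

lemma transport (r w d n t : ℕ) (hr : 1 ≤ r) (S : Finset (Fin n))
    (B : Fin t → Finset (Fin n)) (hB : ∀ i, B i ⊆ S)
    (h : ∀ L M : Finset (Fin t), Disjoint L M → L.card = r → M.card = w →
      d ≤ ((L.inf B) \ (M.sup B)).card) :
    ∃ B' : Fin t → Finset (Fin S.card), IsCFF r w d S.card t B' := by
  let e := S.orderIsoOfFin rfl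
  refine ⟨fun i => Finset.univ.filter (fun x => ((e x : Fin n)) ∈ B i), ?_⟩
  intro L M hd hL hM
  have key := h L M hd hL hM
  have hLne : L.Nonempty := Finset.card_pos.mp (by omega)
  have himg : ((L.inf fun i => Finset.univ.filter (fun x => ((e x : Fin n)) ∈ B i)) \
      (M.sup fun i => Finset.univ.filter (fun x => ((e x : Fin n)) ∈ B i))).image
        (fun x => (e x : Fin n)) = (L.inf B) \ (M.sup B) := by
    ext y
    simp only [Finset.mem_image, Finset.mem_sdiff, Finset.mem_inf, Finset.mem_sup,
      Finset.mem_filter, Finset.mem_univ, true_and]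
    constructor
    · rintro ⟨x, ⟨h1, h2⟩, rfl⟩
      refine ⟨fun i hi => h1 i hi, ?_⟩
      rintro ⟨m, hm, hmem⟩
      exact h2 ⟨m, hm, hmem⟩
    · rintro ⟨h1, h2⟩
      obtain ⟨l, hl⟩ := hLne
      have hyS : y ∈ S := hB l (h1 l hl)
      refine ⟨e.symm ⟨y, hyS⟩, ⟨?_, ?_⟩, ?_⟩
      · intro i hi
        simpa using h1 i hi
      · rintro ⟨m, hm, hmem⟩
        exact h2 ⟨m, hm, by simpa using hmem⟩
      · simp
  have hinj : Function.Injective (fun x : Fin S.card => (e x : Fin n)) := by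
    intro a b hab
    exact e.injective (Subtype.ext hab)
  calc d ≤ ((L.inf B) \ (M.sup B)).card := key
    _ = _ := by rw [← himg, Finset.card_image_of_injective _ hinj]

lemma ncff_le (r w t n : ℕ) (hr : r ≠ 0) (hw : w ≠ 0)
    (h : ∃ B : Fin t → Finset (Fin n), IsCFF r w 1 n t B) : Ncff r w 1 t ≤ n := by
  rw [Ncff, if_neg (by tauto)]
  exact Nat.sInf_le h

lemma ncff_recursion (r w t : ℕ) (hr : 2 ≤ r) (hw : 2 ≤ w) (ht : 1 ≤ t) :
    Ncff r (w-1) 1 (t-1) + Ncff (r-1) w 1 (t-1) ≤ Ncff r w 1 t := by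
  obtain ⟨s, rfl⟩ : ∃ s, t = s + 1 := ⟨t - 1, by omega⟩
  simp only [Nat.add_sub_cancel]
  set n := Ncff r w 1 (s+1) with hn
  have hmem : n ∈ {m : ℕ | ∃ B : Fin (s+1) → Finset (Fin m), IsCFF r w 1 m (s+1) B} := by
    rw [hn, Ncff, if_neg (by omega)]
    exact Nat.sInf_mem ⟨2 ^ (s+1), cff_exists r w (s+1)⟩
  obtain ⟨B, hB⟩ := hmem
  set K := B (Fin.last s) with hK
  have hlast_not_map : ∀ (A : Finset (Fin s)), Fin.last s ∉ A.map Fin.castSuccEmb := by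
    intro A h
    obtain ⟨a, _, ha⟩ := Finset.mem_map.mp h
    exact absurd ha (Fin.castSucc_lt_last a).ne
  -- first family : (r-1, w) on K
  have h1 : ∃ B' : Fin s → Finset (Fin K.card), IsCFF (r-1) w 1 K.card s B' := by
    apply transport (r-1) w 1 n s (by omega) K (fun i => B i.castSucc ∩ K)
      (fun i => Finset.inter_subset_right)
    intro L M hd hL hM
    have key := hB (insert (Fin.last s) (L.map Fin.castSuccEmb))
      (M.map Fin.castSuccEmb) ?_ ?_ ?_
    · obtain ⟨x, hx⟩ := Finset.card_pos.mp key
      rw [Finset.mem_sdiff] at hx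
      obtain ⟨hx1, hx2⟩ := hx
      rw [Finset.mem_inf] at hx1
      rw [Finset.one_le_card]
      refine ⟨x, Finset.mem_sdiff.mpr ⟨Finset.mem_inf.mpr ?_, ?_⟩⟩
      · intro l hl
        exact Finset.mem_inter.mpr ⟨hx1 _ (Finset.mem_insert_of_mem
          (Finset.mem_map_of_mem _ hl)), hx1 _ (Finset.mem_insert_self _ _)⟩
      · intro hmem
        obtain ⟨m, hm, hxm⟩ := Finset.mem_sup.mp hmem
        exact hx2 (Finset.mem_sup.mpr ⟨m.castSucc, Finset.mem_map_of_mem _ hm,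
          (Finset.mem_inter.mp hxm).1⟩)
    · rw [Finset.disjoint_insert_left]
      exact ⟨hlast_not_map M, (Finset.disjoint_map _).mpr hd⟩
    · rw [Finset.card_insert_of_notMem (hlast_not_map L), Finset.card_map, hL]; omega
    · rw [Finset.card_map]; exact hM
  -- second family : (r, w-1) on Kᶜ
  have h2 : ∃ B' : Fin s → Finset (Fin Kᶜ.card), IsCFF r (w-1) 1 Kᶜ.card s B' := by
    apply transport r (w-1) 1 n s (by omega) Kᶜ (fun i => B i.castSucc \ K)
      (fun i => by intro x hx; rw [Finset.mem_compl]; exact (Finset.mem_sdiff.mp hx).2)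
    intro L M hd hL hM
    have key := hB (L.map Fin.castSuccEmb)
      (insert (Fin.last s) (M.map Fin.castSuccEmb)) ?_ ?_ ?_
    · obtain ⟨x, hx⟩ := Finset.card_pos.mp key
      rw [Finset.mem_sdiff] at hx
      obtain ⟨hx1, hx2⟩ := hx
      rw [Finset.mem_inf] at hx1
      have hxK : x ∉ K := fun h => hx2 (Finset.mem_sup.mpr
        ⟨Fin.last s, Finset.mem_insert_self _ _, h⟩)
      rw [Finset.one_le_card]
      refine ⟨x, Finset.mem_sdiff.mpr ⟨Finset.mem_inf.mpr ?_, ?_⟩⟩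
      · intro l hl
        exact Finset.mem_sdiff.mpr ⟨hx1 _ (Finset.mem_map_of_mem _ hl), hxK⟩
      · intro hmem
        obtain ⟨m, hm, hxm⟩ := Finset.mem_sup.mp hmem
        exact hx2 (Finset.mem_sup.mpr ⟨m.castSucc, Finset.mem_insert_of_mem
          (Finset.mem_map_of_mem _ hm), (Finset.mem_sdiff.mp hxm).1⟩)
    · rw [Finset.disjoint_insert_right]
      exact ⟨fun h => hlast_not_map L h, (Finset.disjoint_map _).mpr hd⟩
    · rw [Finset.card_map]; exact hL
    · rw [Finset.card_insert_of_notMem (hlast_not_map M), Finset.card_map, hM]; omega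
  have b1 := ncff_le (r-1) w s K.card (by omega) (by omega) h1
  have b2 := ncff_le r (w-1) s Kᶜ.card (by omega) (by omega) h2
  have hcc : Kᶜ.card + K.card = n := by
    rw [Finset.card_compl]
    have : K.card ≤ n := by simpa using Finset.card_le_univ K
    simp only [Fintype.card_fin]
    omega
  omega



def Fcff (r w : ℕ) : ℕ :=
  (r+w).choose (w+1) + (r+w-1).choose (w+1)
    + 3 * (if 2 ≤ w then (r+w-4).choose (w-2) else 0)

lemma F_one : ∀ r : ℕ, Fcff r 1 = r ^ 2 := by
  have key : ∀ r : ℕ, (r+1).choose 2 + r.choose 2 = r ^ 2 := by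
    intro r
    induction r with
    | zero => rfl
    | succ r ih =>
      have p : ∀ n : ℕ, (n+1).choose 2 = n.choose 1 + n.choose 2 :=
        fun n => Nat.choose_succ_succ n 1
      have q1 : (r+1+1).choose 2 = (r+1).choose 1 + (r+1).choose 2 := p (r+1)
      have q2 : (r+1).choose 2 = r.choose 1 + r.choose 2 := p r
      have c1 := Nat.choose_one_right r
      have c2 := Nat.choose_one_right (r+1)
      have h2 : (r+1)^2 = r^2+2*r+1 := by ring
      omega
  intro r
  simp only [Fcff, show ¬ (2 ≤ 1) from by omega, if_false, Nat.add_sub_cancel, mul_zero,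
    add_zero]
  exact key r

lemma F_pascal (s v : ℕ) : Fcff (s+2) (v+2) = Fcff (s+2) (v+1) + Fcff (s+1) (v+2) := by
  have p : ∀ n k : ℕ, (n+1).choose (k+1) = n.choose k + n.choose (k+1) :=
    fun n k => Nat.choose_succ_succ n k
  rcases v with _ | u
  · simp only [Fcff]
    norm_num
    rw [show s+2+2 = s+4 from by omega, show s+2+1 = s+3 from by omega,
      show s+1+2 = s+3 from by omega]
    have e1 : (s+4).choose 3 = (s+3).choose 2 + (s+3).choose 3 := p (s+3) 2
    have e2 : (s+3).choose 3 = (s+2).choose 2 + (s+2).choose 3 := p (s+2) 2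
    omega
  · simp only [Fcff]
    norm_num
    simp only [show s+2+(u+1+2)-4 = s+u+1 from by omega,
      show s+2+(u+1+1)-4 = s+u from by omega,
      show s+1+(u+1+2)-4 = s+u from by omega,
      show u+1+1-2 = u from by omega,
      show s+2+(u+1+2) = s+u+5 from by omega,
      show s+2+(u+2) = s+u+4 from by omega,
      show s+2+(u+1+1) = s+u+4 from by omega,
      show s+2+(u+1) = s+u+3 from by omega,
      show s+1+(u+1+2) = s+u+4 from by omega,
      show s+1+(u+2) = s+u+3 from by omega,
      show u+1+2+1 = u+4 from by omega,
      show u+1+1+1 = u+3 from by omega,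
      show s+u+5-4 = s+u+1 from by omega,
      show s+u+4-4 = s+u from by omega]
    have e1 : (s+u+5).choose (u+4) = (s+u+4).choose (u+3) + (s+u+4).choose (u+4) :=
      p (s+u+4) (u+3)
    have e2 : (s+u+4).choose (u+4) = (s+u+3).choose (u+3) + (s+u+3).choose (u+4) :=
      p (s+u+3) (u+3)
    have e3 : (s+u+1).choose (u+1) = (s+u).choose u + (s+u).choose (u+1) := p (s+u) u
    omega

lemma choose_succ_le (n k : ℕ) (h : n ≤ 2*k+1) : n.choose (k+1) ≤ n.choose k := by
  have h1 := Nat.choose_succ_right_eq n k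
  have h2 : n.choose k * (n - k) ≤ n.choose k * (k+1) := Nat.mul_le_mul_left _ (by omega)
  rw [← h1] at h2
  exact Nat.le_of_mul_le_mul_right h2 (by omega)

lemma F_swap (r : ℕ) (hr : 2 ≤ r) : Fcff (r-1) r ≤ Fcff r (r-1) := by
  obtain ⟨q, rfl⟩ : ∃ q, r = q + 2 := ⟨r-2, by omega⟩
  rcases q with _ | m
  · simp [Fcff]
  · simp only [Fcff]
    norm_num
    simp only [show m+2+(m+1+2)-4 = 2*m+1 from by omega,
      show m+1+2+(m+2)-4 = 2*m+1 from by omega,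
      show m+2+(m+1+2) = 2*m+5 from by omega,
      show m+2+(m+2) = 2*m+4 from by omega,
      show m+1+2+(m+2) = 2*m+5 from by omega,
      show m+1+2+(m+1) = 2*m+4 from by omega,
      show m+1+2+1 = m+4 from by omega,
      show m+2+1 = m+3 from by omega,
      show 2*m+5-4 = 2*m+1 from by omega]
    have g1 : (2*m+5).choose (m+4) ≤ (2*m+5).choose (m+3) :=
      choose_succ_le _ (m+3) (by omega)
    have g2 : (2*m+4).choose (m+4) ≤ (2*m+4).choose (m+3) :=
      choose_succ_le _ (m+3) (by omega)
    have g3 : (2*m+1).choose (m+1) ≤ (2*m+1).choose m := choose_succ_le _ m (by omega)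
    omega

lemma log_ineq (a x : ℕ) (ha : 2 ≤ a) (hx : a + 1 ≤ x) :
    Real.log ((x:ℝ)+1) * Real.log a ≤ Real.log x * Real.log ((a:ℝ)+1) := by
  have hA : (2:ℝ) ≤ a := by exact_mod_cast ha
  have hX : (a:ℝ)+1 ≤ x := by exact_mod_cast hx
  have hA0 : (0:ℝ) < a := by linarith
  have hX0 : (0:ℝ) < x := by linarith
  have h1 : Real.log ((x:ℝ)+1) - Real.log x ≤ Real.log ((a:ℝ)+1) - Real.log a := by
    rw [← Real.log_div (by linarith) (ne_of_gt hX0),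
      ← Real.log_div (by linarith) (ne_of_gt hA0)]
    apply Real.log_le_log (by positivity)
    rw [div_le_div_iff₀ hX0 hA0]
    nlinarith
  have h2 : Real.log a ≤ Real.log x := Real.log_le_log hA0 (by linarith)
  have h3 : 0 ≤ Real.log a := Real.log_nonneg (by linarith)
  have h4 : 0 ≤ Real.log ((a:ℝ)+1) - Real.log a := by
    have := Real.log_le_log hA0 (by linarith : (a:ℝ) ≤ (a:ℝ)+1); linarith
  nlinarith [mul_le_mul h1 h2 h3 h4]

lemma main_aux (c : ℝ) (hc : 0 < c)
    (hbase : ∀ r t : ℕ, 2 ≤ r → r + 1 ≤ t →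
      c * ((r : ℝ) ^ 2 / Real.log r) * Real.log t ≤ Ncff r 1 1 t) :
    ∀ k r w t : ℕ, r + w ≤ k → 0 < w → w ≤ r → 2 ≤ r → r + w ≤ t →
      c * ((Fcff r w : ℝ) / Real.log r) * Real.log ((t - w + 1 : ℕ) : ℝ)
        ≤ (Ncff r w 1 t : ℝ) := by
  intro k
  induction k with
  | zero => intro r w t hk; omega
  | succ k ih =>
    intro r w t hk hw hwr hr ht
    by_cases hw1 : w = 1
    · subst hw1
      rw [F_one r, show t - 1 + 1 = t from by omega]
      push_cast
      exact hbase r t hr (by omega)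
    · -- 2 ≤ w
      have hw2' : 2 ≤ w := by omega
      have hlogr : 0 < Real.log r := Real.log_pos (by exact_mod_cast hr)
      have hL1 : (1:ℝ) ≤ ((t - w + 1 : ℕ) : ℝ) := by exact_mod_cast Nat.le_add_left 1 (t-w)
      have hL : 0 ≤ Real.log ((t - w + 1 : ℕ) : ℝ) := Real.log_nonneg hL1
      have h1 := ih r (w-1) (t-1) (by omega) (by omega) (by omega) hr (by omega)
      rw [show t - 1 - (w-1) + 1 = t - w + 1 from by omega] at h1
      have hrec := ncff_recursion r w t hr hw2' (by omega)
      have pascal : Fcff r w = Fcff r (w-1) + Fcff (r-1) w := by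
        have := F_pascal (r-2) (w-2)
        rw [show r-2+2 = r from by omega, show w-2+2 = w from by omega,
          show w-2+1 = w-1 from by omega, show r-2+1 = r-1 from by omega] at this
        exact this
      have h2 : c * ((Fcff (r-1) w : ℝ) / Real.log r) * Real.log ((t - w + 1 : ℕ) : ℝ)
          ≤ (Ncff (r-1) w 1 (t-1) : ℝ) := by
        rcases eq_or_lt_of_le hwr with heq | hlt
        · -- w = r
          have hsym : Ncff (r-1) w 1 (t-1) = Ncff r (w-1) 1 (t-1) := by
            rw [ncff_symm, ← heq, show w - 1 = r - 1 from by omega, heq]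
          rw [hsym]
          refine le_trans ?_ h1
          have hFle : (Fcff (r-1) w : ℝ) ≤ (Fcff r (w-1) : ℝ) := by
            have h := F_swap r hr
            rw [heq]
            exact_mod_cast h
          gcongr
        · -- w < r
          have h2' := ih (r-1) w (t-1) (by omega) hw (by omega) (by omega) (by omega)
          rw [show t - 1 - w + 1 = t - w from by omega] at h2'
          refine le_trans ?_ h2'
          have key := log_ineq (r-1) (t-w) (by omega) (by omega)
          have c1 : ((r:ℕ):ℝ) = ((r-1:ℕ):ℝ) + 1 := by
            push_cast [Nat.cast_sub (by omega : 1 ≤ r)]; ring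
          have c2 : ((t-w+1:ℕ):ℝ) = ((t-w:ℕ):ℝ) + 1 := by push_cast; ring
          have hlogr1 : 0 < Real.log ((r-1:ℕ):ℝ) := by
            apply Real.log_pos
            exact_mod_cast (by omega : 1 < r - 1)
          have hA1 : 0 < Real.log (((r-1:ℕ):ℝ) + 1) := by rw [← c1]; exact hlogr
          have step : Real.log (((t-w:ℕ):ℝ)+1) / Real.log (((r-1:ℕ):ℝ)+1)
              ≤ Real.log ((t-w:ℕ):ℝ) / Real.log ((r-1:ℕ):ℝ) := by
            rw [div_le_div_iff₀ hA1 hlogr1]; exact key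
          have hcF : 0 ≤ c * (Fcff (r-1) w : ℝ) := mul_nonneg hc.le (Nat.cast_nonneg _)
          calc c * ((Fcff (r-1) w : ℝ) / Real.log r) * Real.log ((t-w+1:ℕ):ℝ)
              = (c * (Fcff (r-1) w : ℝ))
                  * (Real.log (((t-w:ℕ):ℝ)+1) / Real.log (((r-1:ℕ):ℝ)+1)) := by
                rw [c2, c1]; ring
            _ ≤ (c * (Fcff (r-1) w : ℝ))
                  * (Real.log ((t-w:ℕ):ℝ) / Real.log ((r-1:ℕ):ℝ)) :=
                mul_le_mul_of_nonneg_left step hcF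
            _ = c * ((Fcff (r-1) w : ℝ) / Real.log ((r-1:ℕ):ℝ))
                  * Real.log ((t-w:ℕ):ℝ) := by ring
      calc c * ((Fcff r w : ℝ) / Real.log r) * Real.log ((t - w + 1 : ℕ) : ℝ)
          = c * ((Fcff r (w-1) : ℝ) / Real.log r) * Real.log ((t - w + 1 : ℕ) : ℝ)
            + c * ((Fcff (r-1) w : ℝ) / Real.log r) * Real.log ((t - w + 1 : ℕ) : ℝ) := by
            rw [pascal]; push_cast; ring
        _ ≤ (Ncff r (w-1) 1 (t-1) : ℝ) + (Ncff (r-1) w 1 (t-1) : ℝ) := add_le_add h1 h2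
        _ ≤ (Ncff r w 1 t : ℝ) := by exact_mod_cast hrec

/-- If `c > 0` is a constant with `N((r,1),t) ≥ c·(r²/log r)·log t` for all `r ≥ 2`,
`t ≥ r+1`, then for all positive `r, w, t` with `r ≥ w`, `r ≥ 2`, `t ≥ r + w`,
`N((r,w),t) ≥ c·((C(r+w,w+1) + C(r+w−1,w+1) + 3·C(r+w−4,w−2)) / log r)·log(t−w+1)`,
where `C(r+w−4, w−2)` is read as 0 when `w < 2`. -/
theorem cff_estimate_bound (c : ℝ) (hc : 0 < c)
    (hbase : ∀ r t : ℕ, 2 ≤ r → r + 1 ≤ t →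
      c * ((r : ℝ) ^ 2 / Real.log r) * Real.log t ≤ Ncff r 1 1 t)
    (r w t : ℕ) (hw : 0 < w) (hwr : w ≤ r) (hr : 2 ≤ r) (ht : r + w ≤ t) :
    c * ((((r + w).choose (w + 1) : ℝ) + ((r + w - 1).choose (w + 1) : ℝ)
          + 3 * (if 2 ≤ w then ((r + w - 4).choose (w - 2) : ℝ) else 0)) / Real.log r)
        * Real.log ((t - w + 1 : ℕ) : ℝ)
      ≤ Ncff r w 1 t := by
  have hF : (((r + w).choose (w + 1) : ℝ) + ((r + w - 1).choose (w + 1) : ℝ)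
      + 3 * (if 2 ≤ w then ((r + w - 4).choose (w - 2) : ℝ) else 0)) = (Fcff r w : ℝ) := by
    simp only [Fcff]
    push_cast [apply_ite (Nat.cast : ℕ → ℝ)]
    ring
  rw [hF]
  exact main_aux c hc hbase (r + w) r w t le_rfl hw hwr hr ht
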